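/- Let G be a Gröbner basis of an ideal I in P = F_2[x_1,…,x_n] with respect to an admissible monomial ordering. If the leading monomial of every element of G is square free, then the quotient ring R = P/I is nilpotent free: for every r ∈ R and every k ≥ 1, r^k = 0 implies r = 0 (equivalently, x ≠ 0 implies x^m ≠ 0 for all m). -/

import Mathlib

set_option synthInstance.maxHeartbeats 400000
set_option maxHeartbeats 1000000

open MvPolynomial

/-- The leading monomial of a polynomial with respect to a linear order `ord` on monomials
(exponent vectors); by convention `LM 0 = 0`. -/
noncomputable def LM (n : ℕ) (ord : LinearOrder (Fin n →₀ ℕ))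
    (f : MvPolynomial (Fin n) (ZMod 2)) : Fin n →₀ ℕ :=
  if h : f = 0 then 0 else @Finset.max' _ ord f.support (by
    rw [Finset.nonempty_iff_ne_empty]
    simpa [MvPolynomial.support_eq_empty] using h)

/-- If `G` is a Gröbner basis of an ideal `I ⊆ F₂[x₁,…,x_n]` with respect to an admissible
monomial ordering, and every leading monomial of `G` is square free, then `P/I` is nilpotent
free.  Here a Gröbner basis is a generating set of `I` such that the monomials not divisible by
any `LM g`, `g ∈ G`, map to an `F₂`-basis of `P/I`; divisibility of monomials is the pointwise
order `≤` on exponent vectors. -/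
theorem groebner_squarefree_nilpotentFree (n : ℕ)
    (ord : LinearOrder (Fin n →₀ ℕ))
    (admissible : ∀ a b c : Fin n →₀ ℕ, ord.le a b → ord.le (a + c) (b + c))
    (I : Ideal (MvPolynomial (Fin n) (ZMod 2)))
    (G : Finset (MvPolynomial (Fin n) (ZMod 2)))
    (hG0 : (0 : MvPolynomial (Fin n) (ZMod 2)) ∉ G)
    (hspan : Ideal.span (G : Set (MvPolynomial (Fin n) (ZMod 2))) = I)
    (hbasis : ∃ b : Module.Basis {m : Fin n →₀ ℕ // ∀ g ∈ G, ¬ LM n ord g ≤ m} (ZMod 2)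
        (MvPolynomial (Fin n) (ZMod 2) ⧸ I),
        ∀ m, b m = Ideal.Quotient.mk I (monomial m.1 1))
    (hsqfree : ∀ g ∈ G, ∀ i : Fin n, LM n ord g i ≤ 1) :
    ∀ r : MvPolynomial (Fin n) (ZMod 2) ⧸ I, ∀ k : ℕ, 1 ≤ k → r ^ k = 0 → r = 0 := by
  obtain ⟨b, hb⟩ := hbasis
  set Q := MvPolynomial (Fin n) (ZMod 2) ⧸ I with hQ
  by_cases htriv : (1 : Q) = 0
  · intro r k hk hr
    calc r = r * 1 := (mul_one r).symm
    _ = 0 := by rw [htriv, mul_zero]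
  haveI : Nontrivial Q := nontrivial_of_ne 1 0 htriv
  haveI : Fact (Nat.Prime 2) := ⟨Nat.prime_two⟩
  haveI : CharP Q 2 := charP_of_injective_algebraMap (algebraMap (ZMod 2) Q).injective 2
  haveI : ExpChar Q 2 := ExpChar.prime Nat.prime_two
  -- the doubling map on standard monomials
  have hdmem : ∀ m : {m : Fin n →₀ ℕ // ∀ g ∈ G, ¬ LM n ord g ≤ m},
      ∀ g ∈ G, ¬ LM n ord g ≤ m.1 + m.1 := by
    intro m g hg hle
    refine m.2 g hg ?_
    rw [Finsupp.le_def] at hle ⊢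
    intro i
    have h1 := hsqfree g hg i
    have h2 := hle i
    simp only [Finsupp.add_apply] at h2
    omega
  set d : {m : Fin n →₀ ℕ // ∀ g ∈ G, ¬ LM n ord g ≤ m} →
      {m : Fin n →₀ ℕ // ∀ g ∈ G, ¬ LM n ord g ≤ m} :=
    fun m => ⟨m.1 + m.1, hdmem m⟩ with hd
  have hdinj : Function.Injective d := by
    intro a c hac
    have h : a.1 + a.1 = c.1 + c.1 := congrArg Subtype.val hac
    refine Subtype.ext (Finsupp.ext fun i => ?_)
    have := DFunLike.congr_fun h i
    simp only [Finsupp.add_apply] at this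
    omega
  have hbsq : ∀ m, b m ^ 2 = b (d m) := by
    intro m
    rw [hb, hb]
    show (Ideal.Quotient.mk I) (monomial m.1 1) ^ 2 = _
    rw [sq, ← map_mul, monomial_mul, one_mul]
  have key : ∀ r : Q, r ^ 2 = 0 → r = 0 := by
    intro r hr
    have hsum : (∑ m ∈ (b.repr r).support, b.repr r m • b m) = r := by
      have := b.linearCombination_repr r
      rwa [Finsupp.linearCombination_apply, Finsupp.sum] at this
    have hsq : r ^ 2 = ∑ m ∈ (b.repr r).support, b.repr r m • (b ∘ d) m := by
      conv_lhs => rw [← hsum]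
      rw [sum_pow_char]
      refine Finset.sum_congr rfl fun m hm => ?_
      rw [smul_pow, hbsq, ZMod.pow_card]
      rfl
    rw [hr] at hsq
    have hli := b.linearIndependent.comp d hdinj
    have hz := linearIndependent_iff'.mp hli (b.repr r).support (fun m => b.repr r m) hsq.symm
    have hc : b.repr r = 0 := by
      ext m
      by_cases hm : m ∈ (b.repr r).support
      · exact hz m hm
      · simpa using Finsupp.notMem_support_iff.mp hm
    exact b.repr.map_eq_zero_iff.mp hc
  have pow2 : ∀ j : ℕ, ∀ r : Q, r ^ (2 ^ j) = 0 → r = 0 := by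
    intro j
    induction j with
    | zero => intro r hr; simpa using hr
    | succ i ih =>
      intro r hr
      apply ih
      apply key
      rw [← pow_mul, ← pow_succ]
      exact hr
  intro r k hk hr
  apply pow2 k
  have h2k : 2 ^ k = k + (2 ^ k - k) := by
    have := Nat.lt_two_pow_self (n := k)
    omega
  rw [h2k, pow_add, hr, zero_mul]
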